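/- Let S ≥ 1, let Q and Q̄ be S×S row-stochastic real matrices, α ∈ (0,1), let c ∈ ℝ^S have nonnegative entries, and let v = (1−α)(I − αQ)^{-1} c and v̄ = (1−α)(I − αQ̄)^{-1} c. Then for every T ∈ ℕ with T ≥ 1: ‖v̄ − v‖_∞ ≤ (α/(1−α)) · max_{1 ≤ τ ≤ T} ‖(Q̄ − Q) Q^{τ−1} c‖_∞ + 2 ‖c‖_∞ α^T. -/

import Mathlib

open Matrix Finset

private lemma stoch_contract {S : ℕ} (P : Matrix (Fin S) (Fin S) ℝ)
    (hP : ∀ i j, 0 ≤ P i j) (hrow : ∀ i, ∑ j, P i j = 1) (x : Fin S → ℝ) :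
    ‖P.mulVec x‖ ≤ ‖x‖ := by
  rw [pi_norm_le_iff_of_nonneg (norm_nonneg x)]
  intro i
  have : P.mulVec x i = ∑ j, P i j * x j := rfl
  rw [this, Real.norm_eq_abs]
  calc |∑ j, P i j * x j| ≤ ∑ j, |P i j * x j| := Finset.abs_sum_le_sum_abs _ _
    _ = ∑ j, P i j * |x j| := by
        refine Finset.sum_congr rfl fun j _ => ?_
        rw [abs_mul, abs_of_nonneg (hP i j)]
    _ ≤ ∑ j, P i j * ‖x‖ := by
        refine Finset.sum_le_sum fun j _ => ?_
        exact mul_le_mul_of_nonneg_left (norm_le_pi_norm x j) (hP i j)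
    _ = ‖x‖ := by rw [← Finset.sum_mul, hrow, one_mul]

private lemma stoch_pow_contract {S : ℕ} (P : Matrix (Fin S) (Fin S) ℝ)
    (hP : ∀ i j, 0 ≤ P i j) (hrow : ∀ i, ∑ j, P i j = 1) (x : Fin S → ℝ) (n : ℕ) :
    ‖(P ^ n).mulVec x‖ ≤ ‖x‖ := by
  induction n with
  | zero => simp
  | succ n ih =>
      rw [pow_succ', ← Matrix.mulVec_mulVec]
      exact (stoch_contract P hP hrow _).trans ih

private lemma value_fixed_point {S : ℕ} (Q : Matrix (Fin S) (Fin S) ℝ)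
    (hQnonneg : ∀ i j, 0 ≤ Q i j) (hQrow : ∀ i, ∑ j, Q i j = 1)
    (α : ℝ) (hα0 : 0 < α) (hα1 : α < 1) (c : Fin S → ℝ) (v : Fin S → ℝ)
    (hv : v = (1 - α) • ((1 - α • Q)⁻¹).mulVec c) :
    v = (1 - α) • c + α • Q.mulVec v := by
  have hdiag : ∀ k, Q k k ≤ 1 := by
    intro k
    rw [← hQrow k]
    exact Finset.single_le_sum (fun j _ => hQnonneg k j) (Finset.mem_univ k)
  have hdet : (1 - α • Q).det ≠ 0 := by
    apply det_ne_zero_of_sum_row_lt_diag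
    intro k
    have h1 : ∀ j ∈ Finset.univ.erase k, ‖(1 - α • Q) k j‖ = α * Q k j := by
      intro j hj
      have hjk : j ≠ k := Finset.ne_of_mem_erase hj
      have : (1 - α • Q) k j = -(α * Q k j) := by
        simp [Matrix.sub_apply, Matrix.one_apply, hjk.symm]
      rw [this, Real.norm_eq_abs, abs_neg, abs_of_nonneg (mul_nonneg hα0.le (hQnonneg k j))]
    rw [Finset.sum_congr rfl h1, ← Finset.mul_sum,
      Finset.sum_erase_eq_sub (Finset.mem_univ k), hQrow k]
    have hkk : (1 - α • Q) k k = 1 - α * Q k k := by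
      simp [Matrix.sub_apply, Matrix.one_apply]
    rw [hkk, Real.norm_eq_abs, abs_of_pos]
    · nlinarith [hQnonneg k k, hdiag k]
    · nlinarith [hQnonneg k k, hdiag k]
  have key : (1 - α • Q).mulVec v = (1 - α) • c := by
    rw [hv, Matrix.mulVec_smul, Matrix.mulVec_mulVec,
      Matrix.mul_nonsing_inv _ (isUnit_iff_ne_zero.mpr hdet), Matrix.one_mulVec]
  have expand : (1 - α • Q).mulVec v = v - α • Q.mulVec v := by
    rw [Matrix.sub_mulVec, Matrix.one_mulVec, Matrix.smul_mulVec]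
  rw [expand] at key
  exact eq_add_of_sub_eq key

private lemma value_norm_le {S : ℕ} (Q : Matrix (Fin S) (Fin S) ℝ)
    (hQnonneg : ∀ i j, 0 ≤ Q i j) (hQrow : ∀ i, ∑ j, Q i j = 1)
    (α : ℝ) (hα0 : 0 < α) (hα1 : α < 1) (c : Fin S → ℝ) (v : Fin S → ℝ)
    (hfp : v = (1 - α) • c + α • Q.mulVec v) :
    ‖v‖ ≤ ‖c‖ := by
  have h1 : ‖v‖ ≤ (1 - α) * ‖c‖ + α * ‖Q.mulVec v‖ := by
    calc ‖v‖ = ‖(1 - α) • c + α • Q.mulVec v‖ := by nth_rewrite 1 [hfp]; rfl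
      _ ≤ ‖(1 - α) • c‖ + ‖α • Q.mulVec v‖ := norm_add_le _ _
      _ = (1 - α) * ‖c‖ + α * ‖Q.mulVec v‖ := by
          rw [norm_smul, norm_smul, Real.norm_eq_abs, Real.norm_eq_abs,
            abs_of_pos (by linarith), abs_of_pos hα0]
  have h2 : ‖Q.mulVec v‖ ≤ ‖v‖ := stoch_contract Q hQnonneg hQrow v
  nlinarith [norm_nonneg v]

private lemma value_expansion {S : ℕ} (Q : Matrix (Fin S) (Fin S) ℝ)
    (α : ℝ) (c : Fin S → ℝ) (v : Fin S → ℝ)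
    (hfp : v = (1 - α) • c + α • Q.mulVec v) (n : ℕ) :
    v = (1 - α) • ∑ t ∈ Finset.range n, α ^ t • (Q ^ t).mulVec c
        + α ^ n • (Q ^ n).mulVec v := by
  induction n with
  | zero => simp
  | succ n ih =>
      calc v = (1 - α) • ∑ t ∈ Finset.range n, α ^ t • (Q ^ t).mulVec c
            + α ^ n • (Q ^ n).mulVec v := ih
        _ = (1 - α) • ∑ t ∈ Finset.range n, α ^ t • (Q ^ t).mulVec c
            + α ^ n • (Q ^ n).mulVec ((1 - α) • c + α • Q.mulVec v) := by rw [← hfp]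
        _ = (1 - α) • ∑ t ∈ Finset.range (n + 1), α ^ t • (Q ^ t).mulVec c
            + α ^ (n + 1) • (Q ^ (n + 1)).mulVec v := by
            rw [Matrix.mulVec_add, Matrix.mulVec_smul, Matrix.mulVec_smul,
              Matrix.mulVec_mulVec, ← pow_succ, Finset.sum_range_succ]
            module

theorem backward_epe_value_perturbation_bound
    (S : ℕ) (hS : 1 ≤ S) (Q Qbar : Matrix (Fin S) (Fin S) ℝ)
    (hQnonneg : ∀ i j, 0 ≤ Q i j) (hQrow : ∀ i, ∑ j, Q i j = 1)
    (hQbarnonneg : ∀ i j, 0 ≤ Qbar i j) (hQbarrow : ∀ i, ∑ j, Qbar i j = 1)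
    (α : ℝ) (hα : α ∈ Set.Ioo (0 : ℝ) 1)
    (c : Fin S → ℝ) (hc : ∀ s, 0 ≤ c s)
    (v vbar : Fin S → ℝ)
    (hv : v = (1 - α) • ((1 - α • Q)⁻¹).mulVec c)
    (hvbar : vbar = (1 - α) • ((1 - α • Qbar)⁻¹).mulVec c)
    (T : ℕ) (hT : 1 ≤ T) :
    ‖vbar - v‖
      ≤ (α / (1 - α)) *
          (Finset.Icc 1 T).sup' (Finset.nonempty_Icc.mpr hT)
            (fun τ => ‖((Qbar - Q) * Q ^ (τ - 1)).mulVec c‖)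
        + 2 * ‖c‖ * α ^ T := by
  obtain ⟨hα0, hα1⟩ := hα
  set M := (Finset.Icc 1 T).sup' (Finset.nonempty_Icc.mpr hT)
      (fun τ => ‖((Qbar - Q) * Q ^ (τ - 1)).mulVec c‖) with hM
  have hM0 : 0 ≤ M :=
    le_trans (norm_nonneg (((Qbar - Q) * Q ^ (1 - 1)).mulVec c))
      (Finset.le_sup' (fun τ => ‖((Qbar - Q) * Q ^ (τ - 1)).mulVec c‖)
        (Finset.mem_Icc.mpr ⟨le_refl 1, hT⟩))
  -- fixed points
  have hfpQ : v = (1 - α) • c + α • Q.mulVec v :=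
    value_fixed_point Q hQnonneg hQrow α hα0 hα1 c v hv
  have hfpQbar : vbar = (1 - α) • c + α • Qbar.mulVec vbar :=
    value_fixed_point Qbar hQbarnonneg hQbarrow α hα0 hα1 c vbar hvbar
  have hvle : ‖v‖ ≤ ‖c‖ := value_norm_le Q hQnonneg hQrow α hα0 hα1 c v hfpQ
  have hvbarle : ‖vbar‖ ≤ ‖c‖ := value_norm_le Qbar hQbarnonneg hQbarrow α hα0 hα1 c vbar hfpQbar
  -- difference of powers
  set d : ℕ → Fin S → ℝ := fun t => (Qbar ^ t).mulVec c - (Q ^ t).mulVec c with hdd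
  have hdbound : ∀ t, t ≤ T → ‖d t‖ ≤ t * M := by
    intro t
    induction t with
    | zero => intro _; simp [hdd]
    | succ t ih =>
        intro hle
        have ht : t ≤ T := Nat.le_of_succ_le hle
        have hrec : d (t + 1) = Qbar.mulVec (d t) + ((Qbar - Q) * Q ^ t).mulVec c := by
          have e1 : (Qbar ^ (t + 1)).mulVec c = Qbar.mulVec ((Qbar ^ t).mulVec c) := by
            rw [Matrix.mulVec_mulVec, ← pow_succ']
          have e2 : (Q ^ (t + 1)).mulVec c = Q.mulVec ((Q ^ t).mulVec c) := by
            rw [Matrix.mulVec_mulVec, ← pow_succ']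
          have e3 : ((Qbar - Q) * Q ^ t).mulVec c
              = Qbar.mulVec ((Q ^ t).mulVec c) - Q.mulVec ((Q ^ t).mulVec c) := by
            rw [← Matrix.mulVec_mulVec, Matrix.sub_mulVec]
          simp only [hdd, e1, e2, e3, Matrix.mulVec_sub]
          abel
        have hmem : t + 1 ∈ Finset.Icc 1 T := Finset.mem_Icc.mpr ⟨Nat.succ_le_succ (Nat.zero_le t), hle⟩
        have hMτ : ‖((Qbar - Q) * Q ^ (t + 1 - 1)).mulVec c‖ ≤ M :=
          Finset.le_sup' (fun τ => ‖((Qbar - Q) * Q ^ (τ - 1)).mulVec c‖) hmem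
        simp only [Nat.add_sub_cancel] at hMτ
        calc ‖d (t + 1)‖ ≤ ‖Qbar.mulVec (d t)‖ + ‖((Qbar - Q) * Q ^ t).mulVec c‖ := by
              rw [hrec]; exact norm_add_le _ _
          _ ≤ ‖d t‖ + M := add_le_add (stoch_contract Qbar hQbarnonneg hQbarrow _) hMτ
          _ ≤ t * M + M := add_le_add_left (ih ht) M
          _ = (t + 1 : ℕ) * M := by push_cast; ring
  -- split
  have hexpQ := value_expansion Q α c v hfpQ T
  have hexpQbar := value_expansion Qbar α c vbar hfpQbar T
  have hsplit : vbar - v = (1 - α) • (∑ t ∈ Finset.range T, α ^ t • d t)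
      + α ^ T • ((Qbar ^ T).mulVec vbar - (Q ^ T).mulVec v) := by
    calc vbar - v
        = ((1 - α) • ∑ t ∈ Finset.range T, α ^ t • (Qbar ^ t).mulVec c
            + α ^ T • (Qbar ^ T).mulVec vbar)
          - ((1 - α) • ∑ t ∈ Finset.range T, α ^ t • (Q ^ t).mulVec c
            + α ^ T • (Q ^ T).mulVec v) := by rw [← hexpQbar, ← hexpQ]
      _ = (1 - α) • (∑ t ∈ Finset.range T, α ^ t • d t)
          + α ^ T • ((Qbar ^ T).mulVec vbar - (Q ^ T).mulVec v) := by
          simp only [hdd, smul_sub, Finset.sum_sub_distrib]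
          abel
  -- geometric bound
  have hαnorm : ‖α‖ < 1 := by rw [Real.norm_eq_abs, abs_of_pos hα0]; exact hα1
  have hgeom : ∑ t ∈ Finset.range T, (t : ℝ) * α ^ t ≤ α / (1 - α) ^ 2 := by
    have hs := hasSum_coe_mul_geometric_of_norm_lt_one hαnorm
    rw [← hs.tsum_eq]
    exact Summable.sum_le_tsum _ (fun i _ => by positivity) hs.summable
  have hsum : ‖∑ t ∈ Finset.range T, α ^ t • d t‖ ≤ M * (α / (1 - α) ^ 2) := by
    calc ‖∑ t ∈ Finset.range T, α ^ t • d t‖ ≤ ∑ t ∈ Finset.range T, ‖α ^ t • d t‖ :=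
          norm_sum_le _ _
      _ ≤ ∑ t ∈ Finset.range T, (t : ℝ) * α ^ t * M := by
          refine Finset.sum_le_sum fun t htm => ?_
          rw [norm_smul, Real.norm_eq_abs, abs_of_pos (pow_pos hα0 t)]
          have := hdbound t (Nat.le_of_lt_succ (Nat.lt_succ_of_lt (Finset.mem_range.mp htm)))
          calc α ^ t * ‖d t‖ ≤ α ^ t * ((t : ℝ) * M) :=
                mul_le_mul_of_nonneg_left this (le_of_lt (pow_pos hα0 t))
            _ = (t : ℝ) * α ^ t * M := by ring
      _ = (∑ t ∈ Finset.range T, (t : ℝ) * α ^ t) * M := by rw [← Finset.sum_mul]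
      _ ≤ α / (1 - α) ^ 2 * M := mul_le_mul_of_nonneg_right hgeom hM0
      _ = M * (α / (1 - α) ^ 2) := by ring
  have htail : ‖(Qbar ^ T).mulVec vbar - (Q ^ T).mulVec v‖ ≤ 2 * ‖c‖ := by
    calc ‖(Qbar ^ T).mulVec vbar - (Q ^ T).mulVec v‖
        ≤ ‖(Qbar ^ T).mulVec vbar‖ + ‖(Q ^ T).mulVec v‖ := norm_sub_le _ _
      _ ≤ ‖vbar‖ + ‖v‖ := add_le_add
          (stoch_pow_contract Qbar hQbarnonneg hQbarrow vbar T)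
          (stoch_pow_contract Q hQnonneg hQrow v T)
      _ ≤ 2 * ‖c‖ := by linarith
  have h1α : (0:ℝ) < 1 - α := by linarith
  calc ‖vbar - v‖ ≤ ‖(1 - α) • (∑ t ∈ Finset.range T, α ^ t • d t)‖
        + ‖α ^ T • ((Qbar ^ T).mulVec vbar - (Q ^ T).mulVec v)‖ := by
        rw [hsplit]; exact norm_add_le _ _
    _ ≤ (1 - α) * (M * (α / (1 - α) ^ 2)) + α ^ T * (2 * ‖c‖) := by
        rw [norm_smul, norm_smul, Real.norm_eq_abs, Real.norm_eq_abs,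
          abs_of_pos h1α, abs_of_pos (pow_pos hα0 T)]
        exact add_le_add (mul_le_mul_of_nonneg_left hsum (le_of_lt h1α))
          (mul_le_mul_of_nonneg_left htail (le_of_lt (pow_pos hα0 T)))
    _ = (α / (1 - α)) * M + 2 * ‖c‖ * α ^ T := by
        field_simp
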